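/- (Theorem 1.) Let S ⊆ {1,…,r} and suppose the full-horizon KKT conditions hold for some ω ∈ ℝ^r with ω ≠ 0 and ω_i = 0 for all i ∉ S, with some costates λ ∈ (ℝ^n)^T. Let 1 ≤ t ≤ t+l−1 ≤ T, and let (ω̂, λ̂) ∈ ℝ^r × ℝ^n be any element of the kernel of the recovery matrix H(t,l). If rank H(t,l) = r+n−1 and (ω̂, λ̂) ≠ 0, then there exists a constant c ≠ 0 such that ω̂ = c·ω; in particular ω̂_i = 0 for every i ∉ S and ω̂_i = c·ω_i for every i ∈ S. -/

import Mathlib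

open Matrix

noncomputable section

variable {n m r : ℕ}

/-- Block upper bidiagonal matrix `F_x(t,l)` (0-based block indices): diagonal blocks are
`I_n`, and block `(i, i+1)` is `-(A (t+i))ᵀ`. -/
def Fx (A : ℕ → Matrix (Fin n) (Fin n) ℝ) (t l : ℕ) :
    Matrix (Fin l × Fin n) (Fin l × Fin n) ℝ :=
  fun ip jq =>
    if ip.1 = jq.1 then (if ip.2 = jq.2 then (1 : ℝ) else 0)
    else if (jq.1 : ℕ) = (ip.1 : ℕ) + 1 then -((A (t + (ip.1 : ℕ)))ᵀ ip.2 jq.2)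
    else 0

/-- Block diagonal matrix `F_u(t,l)` with diagonal blocks `(B (t+i))ᵀ`. -/
def Fu (B : ℕ → Matrix (Fin n) (Fin m) ℝ) (t l : ℕ) :
    Matrix (Fin l × Fin m) (Fin l × Fin n) ℝ :=
  fun ip jq => if ip.1 = jq.1 then (B (t + (ip.1 : ℕ)))ᵀ ip.2 jq.2 else 0

/-- Vertical stack `Φ_x(t,l)` of the blocks `(G (t+i))ᵀ`. -/
def Phix (G : ℕ → Matrix (Fin r) (Fin n) ℝ) (t l : ℕ) :
    Matrix (Fin l × Fin n) (Fin r) ℝ :=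
  fun ip q => (G (t + (ip.1 : ℕ)))ᵀ ip.2 q

/-- Vertical stack `Φ_u(t,l)` of the blocks `(D (t+i))ᵀ`. -/
def Phiu (D : ℕ → Matrix (Fin r) (Fin m) ℝ) (t l : ℕ) :
    Matrix (Fin l × Fin m) (Fin r) ℝ :=
  fun ip q => (D (t + (ip.1 : ℕ)))ᵀ ip.2 q

/-- `V(t,l)`: all `n×n` blocks zero except the last one, which is `(A (t+l-1))ᵀ`. -/
def Vm (A : ℕ → Matrix (Fin n) (Fin n) ℝ) (t l : ℕ) :
    Matrix (Fin l × Fin n) (Fin n) ℝ :=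
  fun ip q => if (ip.1 : ℕ) = l - 1 then (A (t + l - 1))ᵀ ip.2 q else 0

/-- `H₁(t,l) = F_u(t,l) · F_x(t,l)⁻¹ · Φ_x(t,l) + Φ_u(t,l)`. -/
def H1m (A : ℕ → Matrix (Fin n) (Fin n) ℝ) (B : ℕ → Matrix (Fin n) (Fin m) ℝ)
    (G : ℕ → Matrix (Fin r) (Fin n) ℝ) (D : ℕ → Matrix (Fin r) (Fin m) ℝ) (t l : ℕ) :
    Matrix (Fin l × Fin m) (Fin r) ℝ :=
  Fu B t l * (Fx A t l)⁻¹ * Phix G t l + Phiu D t l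

/-- `H₂(t,l) = F_u(t,l) · F_x(t,l)⁻¹ · V(t,l)`. -/
def H2m (A : ℕ → Matrix (Fin n) (Fin n) ℝ) (B : ℕ → Matrix (Fin n) (Fin m) ℝ) (t l : ℕ) :
    Matrix (Fin l × Fin m) (Fin n) ℝ :=
  Fu B t l * (Fx A t l)⁻¹ * Vm A t l

/-- The recovery matrix `H(t,l) = [H₁(t,l)  H₂(t,l)]`. -/
def Hm (A : ℕ → Matrix (Fin n) (Fin n) ℝ) (B : ℕ → Matrix (Fin n) (Fin m) ℝ)
    (G : ℕ → Matrix (Fin r) (Fin n) ℝ) (D : ℕ → Matrix (Fin r) (Fin m) ℝ) (t l : ℕ) :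
    Matrix (Fin l × Fin m) (Fin r ⊕ Fin n) ℝ :=
  fromCols (H1m A B G D t l) (H2m A B t l)

/-- Stack the vectors `lam t, lam (t+1), …, lam (t+l-1)` into a vector in `ℝ^{nl}`. -/
def stackVec (lam : ℕ → Fin n → ℝ) (t l : ℕ) : Fin l × Fin n → ℝ :=
  fun ip => lam (t + (ip.1 : ℕ)) ip.2

/-- Full-horizon KKT conditions for the weight vector `ω` with costates `lam 1, …, lam T`. -/
def KKT (A : ℕ → Matrix (Fin n) (Fin n) ℝ) (B : ℕ → Matrix (Fin n) (Fin m) ℝ)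
    (G : ℕ → Matrix (Fin r) (Fin n) ℝ) (D : ℕ → Matrix (Fin r) (Fin m) ℝ) (T : ℕ)
    (ω : Fin r → ℝ) (lam : ℕ → Fin n → ℝ) : Prop :=
  -(Fx A 1 T *ᵥ stackVec lam 1 T) + Phix G 1 T *ᵥ ω = 0 ∧
    Fu B 1 T *ᵥ stackVec lam 1 T + Phiu D 1 T *ᵥ ω = 0

/-- The natural identification of `ℝ^{(l+1)·ι}`-indices with `ℝ^{l·ι} × ℝ^{ι}`-indices. -/
def splitIdx (l : ℕ) (ι : Type*) : Fin (l + 1) × ι → (Fin l × ι) ⊕ ι :=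
  fun ip => if h : (ip.1 : ℕ) < l then Sum.inl (⟨ip.1, h⟩, ip.2) else Sum.inr ip.2


section Helpers

variable {n m r : ℕ}

lemma Fx_mulVec' (A : ℕ → Matrix (Fin n) (Fin n) ℝ) (t l : ℕ) (v : Fin l × Fin n → ℝ)
    (i : Fin l) (p : Fin n) :
    (Fx A t l *ᵥ v) (i, p) =
      v (i, p) - (if h : (i : ℕ) + 1 < l
        then ((A (t + (i : ℕ)))ᵀ *ᵥ fun q => v (⟨(i : ℕ) + 1, h⟩, q)) p else 0) := by
  have key : ∀ jq : Fin l × Fin n, Fx A t l (i, p) jq * v jq =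
      (if jq = (i, p) then v jq else 0)
      + (if ((jq.1 : ℕ) = (i : ℕ) + 1) then -((A (t + (i : ℕ)))ᵀ p jq.2) * v jq else 0) := by
    rintro ⟨j, q⟩
    simp only [Fx]
    by_cases hij : i = j
    · subst hij
      have h2 : ¬ ((i : ℕ) = (i : ℕ) + 1) := by omega
      simp only [if_pos rfl, h2, if_false, add_zero, Prod.mk.injEq, true_and]
      by_cases hpq : p = q
      · simp [hpq]
      · simp [hpq, Ne.symm hpq]
    · have h1 : ¬ ((j, q) = (i, p)) := by simp [Ne.symm hij]
      simp [hij, h1]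
  unfold mulVec dotProduct
  rw [Finset.sum_congr rfl (fun jq _ => key jq), Finset.sum_add_distrib]
  congr 1
  · simp
  · by_cases h : (i : ℕ) + 1 < l
    · rw [dif_pos h]
      have heq : ∀ jq : Fin l × Fin n, ((jq.1 : ℕ) = (i : ℕ) + 1) ↔ jq.1 = ⟨(i:ℕ)+1, h⟩ := by
        rintro ⟨j, q⟩; simp [Fin.ext_iff]
      rw [Finset.sum_congr rfl (fun jq _ => by rw [if_congr (heq jq) rfl rfl])]
      rw [Fintype.sum_prod_type]
      rw [Finset.sum_eq_single (⟨(i:ℕ)+1, h⟩ : Fin l)]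
      · simp only [mulVec, dotProduct, if_pos rfl, neg_mul]
        rw [← Finset.sum_neg_distrib]
        simp
      · intro j _ hj; simp [hj]
      · simp
    · rw [dif_neg h]
      rw [Finset.sum_eq_zero]; · simp
      rintro ⟨j, q⟩ _
      have : ¬ ((j : ℕ) = (i : ℕ) + 1) := by omega
      simp [this]

lemma Fu_mulVec' (B : ℕ → Matrix (Fin n) (Fin m) ℝ) (t l : ℕ) (v : Fin l × Fin n → ℝ)
    (i : Fin l) (p : Fin m) :
    (Fu B t l *ᵥ v) (i, p) = ((B (t + (i : ℕ)))ᵀ *ᵥ fun q => v (i, q)) p := by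
  unfold Fu mulVec dotProduct
  rw [Fintype.sum_prod_type]
  rw [Finset.sum_eq_single i]
  · simp
  · intro j _ hj; simp [Ne.symm hj]
  · simp

lemma Phix_mulVec' (G : ℕ → Matrix (Fin r) (Fin n) ℝ) (t l : ℕ) (w : Fin r → ℝ)
    (i : Fin l) (p : Fin n) :
    (Phix G t l *ᵥ w) (i, p) = ((G (t + (i : ℕ)))ᵀ *ᵥ w) p := rfl

lemma Phiu_mulVec' (D : ℕ → Matrix (Fin r) (Fin m) ℝ) (t l : ℕ) (w : Fin r → ℝ)
    (i : Fin l) (p : Fin m) :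
    (Phiu D t l *ᵥ w) (i, p) = ((D (t + (i : ℕ)))ᵀ *ᵥ w) p := rfl

lemma Vm_mulVec' (A : ℕ → Matrix (Fin n) (Fin n) ℝ) (t l : ℕ) (x : Fin n → ℝ)
    (i : Fin l) (p : Fin n) :
    (Vm A t l *ᵥ x) (i, p) =
      if (i : ℕ) = l - 1 then ((A (t + l - 1))ᵀ *ᵥ x) p else 0 := by
  unfold Vm mulVec dotProduct
  by_cases h : (i : ℕ) = l - 1 <;> simp [h]

lemma Fx_blockTriangular' (A : ℕ → Matrix (Fin n) (Fin n) ℝ) (t l : ℕ) :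
    (Fx A t l).BlockTriangular (fun ip => ip.1) := by
  rintro ⟨i, p⟩ ⟨j, q⟩ h
  simp only [Fin.lt_iff_val_lt_val] at h
  have h1 : ¬ (i = j) := by intro e; subst e; omega
  have h2 : ¬ ((j : ℕ) = (i : ℕ) + 1) := by omega
  simp [Fx, h1, h2]

lemma Fx_det' (A : ℕ → Matrix (Fin n) (Fin n) ℝ) (t l : ℕ) : (Fx A t l).det = 1 := by
  rw [(Fx_blockTriangular' A t l).det]
  apply Finset.prod_eq_one
  intro a _
  have hblk : (Fx A t l).toSquareBlock (fun ip => ip.1) a = 1 := by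
    ext ⟨⟨i1, p⟩, hi⟩ ⟨⟨j1, q⟩, hj⟩
    have hij : i1 = j1 := by
      have h1 : i1 = a := hi
      have h2 : j1 = a := hj
      simp_all
    simp only [toSquareBlock_def, Fx, Matrix.one_apply, Subtype.mk.injEq, Prod.mk.injEq, hij,
      if_pos rfl, true_and]
    simp
  rw [hblk, det_one]

lemma Fx_inv_mul' (A : ℕ → Matrix (Fin n) (Fin n) ℝ) (t l : ℕ) :
    (Fx A t l)⁻¹ * Fx A t l = 1 :=
  nonsing_inv_mul _ (by rw [Fx_det']; exact isUnit_one)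

end Helpers

/-- Theorem 1: if the full-horizon KKT conditions hold for some nonzero `ω` supported on
`S`, and `rank H(t,l) = r+n−1`, then any nonzero kernel element `(ω̂, λ̂)` of `H(t,l)` has
`ω̂ = c·ω` for some `c ≠ 0`; in particular `ω̂ᵢ = 0` off `S` and `ω̂ᵢ = c·ωᵢ` on `S`. -/
theorem recovery_matrix_theorem (n m r T : ℕ) (hn : 0 < n) (hm : 0 < m) (hr : 0 < r) (hT : 1 ≤ T)
    (A : ℕ → Matrix (Fin n) (Fin n) ℝ) (B : ℕ → Matrix (Fin n) (Fin m) ℝ)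
    (G : ℕ → Matrix (Fin r) (Fin n) ℝ) (D : ℕ → Matrix (Fin r) (Fin m) ℝ)
    (hAT : A T = 1)
    (S : Finset (Fin r)) (ω : Fin r → ℝ) (hω : ω ≠ 0) (hsupp : ∀ i ∉ S, ω i = 0)
    (lam : ℕ → Fin n → ℝ) (hKKT : KKT A B G D T ω lam)
    (t l : ℕ) (ht : 1 ≤ t) (hl : 1 ≤ l) (htl : t + l - 1 ≤ T)
    (ωh : Fin r → ℝ) (lamh : Fin n → ℝ)
    (hker : Hm A B G D t l *ᵥ Sum.elim ωh lamh = 0)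
    (hrank : (Hm A B G D t l).rank = r + n - 1)
    (hne : Sum.elim ωh lamh ≠ 0) :
    ∃ c : ℝ, c ≠ 0 ∧ ωh = c • ω ∧ (∀ i ∉ S, ωh i = 0) ∧ ∀ i ∈ S, ωh i = c * ω i := by
  classical
  obtain ⟨hK1', hK2'⟩ := hKKT
  -- Row form of the first KKT condition
  have hK1 : ∀ k, 1 ≤ k → k ≤ T → ∀ p : Fin n,
      lam k p = (if k < T then ((A k)ᵀ *ᵥ lam (k + 1)) p else 0) + ((G k)ᵀ *ᵥ ω) p := by
    intro k hk1 hk2 p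
    have hkT : k - 1 < T := by omega
    have hrow := congrFun hK1' (⟨k - 1, hkT⟩, p)
    rw [Pi.add_apply, Pi.neg_apply, Pi.zero_apply, Fx_mulVec', Phix_mulVec'] at hrow
    simp only [stackVec] at hrow
    have e1 : 1 + (k - 1) = k := by omega
    by_cases hkT' : k < T
    · have hc : ((⟨k - 1, hkT⟩ : Fin T) : ℕ) + 1 < T := by simpa using (by omega : k - 1 + 1 < T)
      rw [dif_pos hc] at hrow
      have e2 : 1 + (((⟨k - 1, hkT⟩ : Fin T) : ℕ) + 1) = k + 1 := by simp; omega
      simp only [e2] at hrow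
      simp only [show ((⟨k - 1, hkT⟩ : Fin T) : ℕ) = k - 1 from rfl, e1] at hrow
      rw [if_pos hkT']
      linarith
    · have hc : ¬ (((⟨k - 1, hkT⟩ : Fin T) : ℕ) + 1 < T) := by simp; omega
      rw [dif_neg hc] at hrow
      simp only [show ((⟨k - 1, hkT⟩ : Fin T) : ℕ) = k - 1 from rfl, e1] at hrow
      rw [if_neg hkT']
      linarith
  -- Row form of the second KKT condition
  have hK2 : ∀ k, 1 ≤ k → k ≤ T → ∀ p : Fin m,
      ((B k)ᵀ *ᵥ lam k) p + ((D k)ᵀ *ᵥ ω) p = 0 := by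
    intro k hk1 hk2 p
    have hkT : k - 1 < T := by omega
    have hrow := congrFun hK2' (⟨k - 1, hkT⟩, p)
    rw [Pi.add_apply, Pi.zero_apply, Fu_mulVec', Phiu_mulVec'] at hrow
    simp only [stackVec] at hrow
    simp only [show ((⟨k - 1, hkT⟩ : Fin T) : ℕ) = k - 1 from rfl,
      show 1 + (k - 1) = k from by omega] at hrow
    exact hrow
  -- the costate recovered by the window
  set lamstar : Fin n → ℝ := if t + l - 1 < T then lam (t + l) else 0 with hls
  have hstack : Fx A t l *ᵥ stackVec lam t l = Phix G t l *ᵥ ω + Vm A t l *ᵥ lamstar := by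
    funext ip
    obtain ⟨i, p⟩ := ip
    rw [Pi.add_apply, Fx_mulVec', Phix_mulVec', Vm_mulVec']
    simp only [stackVec]
    by_cases h : (i : ℕ) + 1 < l
    · rw [dif_pos h]
      have hil : ¬ ((i : ℕ) = l - 1) := by omega
      rw [if_neg hil]
      have hkT : t + (i : ℕ) < T := by omega
      have hrec := hK1 (t + (i : ℕ)) (by omega) (by omega) p
      rw [if_pos hkT] at hrec
      simp only [show t + ((i : ℕ) + 1) = (t + (i : ℕ)) + 1 from by omega]
      linarith
    · rw [dif_neg h]
      have hil : (i : ℕ) = l - 1 := by omega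
      rw [if_pos hil]
      have hrec := hK1 (t + (i : ℕ)) (by omega) (by omega) p
      have e : t + (i : ℕ) = t + l - 1 := by omega
      rw [e] at hrec ⊢
      by_cases hT' : t + l - 1 < T
      · rw [if_pos hT'] at hrec
        rw [hls, if_pos hT']
        simp only [show t + l - 1 + 1 = t + l from by omega] at hrec
        linarith
      · rw [if_neg hT'] at hrec
        rw [hls, if_neg hT']
        simp only [mulVec_zero, Pi.zero_apply]
        linarith
  have h2 : Fu B t l *ᵥ stackVec lam t l + Phiu D t l *ᵥ ω = 0 := by
    funext ip
    obtain ⟨i, p⟩ := ip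
    rw [Pi.add_apply, Pi.zero_apply, Fu_mulVec', Phiu_mulVec']
    simp only [stackVec]
    exact hK2 (t + (i : ℕ)) (by omega) (by omega) p
  -- (ω, lamstar) is in the kernel of the recovery matrix
  have hmem : Hm A B G D t l *ᵥ Sum.elim ω lamstar = 0 := by
    rw [Hm, fromCols_mulVec_sumElim, H1m, H2m, add_mulVec]
    have hXY : (Fu B t l * (Fx A t l)⁻¹ * Phix G t l) *ᵥ ω
        + (Fu B t l * (Fx A t l)⁻¹ * Vm A t l) *ᵥ lamstar
        = Fu B t l *ᵥ stackVec lam t l := by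
      rw [← mulVec_mulVec, ← mulVec_mulVec, ← mulVec_mulVec, ← mulVec_mulVec,
        ← mulVec_add, ← mulVec_add, ← hstack, mulVec_mulVec, mulVec_mulVec, Matrix.mul_assoc, Fx_inv_mul',
        Matrix.mul_one]
    rw [add_right_comm, hXY]
    exact h2
  -- kernel of H has dimension 1
  set f := (Hm A B G D t l).mulVecLin with hf
  have hrange : Module.finrank ℝ (LinearMap.range f) = r + n - 1 := hrank
  have hdom : Module.finrank ℝ (Fin r ⊕ Fin n → ℝ) = r + n := by
    rw [Module.finrank_fintype_fun_eq_card, Fintype.card_sum, Fintype.card_fin, Fintype.card_fin]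
  have hkerdim : Module.finrank ℝ (LinearMap.ker f) = 1 := by
    have h1 := LinearMap.finrank_range_add_finrank_ker f
    rw [hdom, hrange] at h1
    omega
  have hxmem : Sum.elim ω lamstar ∈ LinearMap.ker f := by
    rw [LinearMap.mem_ker, hf, mulVecLin_apply]
    exact hmem
  have hymem : Sum.elim ωh lamh ∈ LinearMap.ker f := by
    rw [LinearMap.mem_ker, hf, mulVecLin_apply]
    exact hker
  have hxne : Sum.elim ω lamstar ≠ 0 := by
    intro h
    apply hω
    funext i
    have := congrFun h (Sum.inl i)
    simpa using this
  have hspan : (ℝ ∙ Sum.elim ω lamstar) = LinearMap.ker f := by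
    apply Submodule.eq_of_le_of_finrank_le
    · rwa [Submodule.span_singleton_le_iff_mem]
    · rw [hkerdim, finrank_span_singleton hxne]
  have hy : Sum.elim ωh lamh ∈ (ℝ ∙ Sum.elim ω lamstar) := hspan ▸ hymem
  obtain ⟨c, hc⟩ := Submodule.mem_span_singleton.mp hy
  have hc0 : c ≠ 0 := by
    intro h
    apply hne
    rw [← hc, h, zero_smul]
  have hωh : ωh = c • ω := by
    funext i
    have := congrFun hc (Sum.inl i)
    simpa using this.symm
  refine ⟨c, hc0, hωh, ?_, ?_⟩
  · intro i hi
    rw [hωh, Pi.smul_apply, hsupp i hi, smul_zero]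
  · intro i _
    rw [hωh, Pi.smul_apply, smul_eq_mul]

end
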